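/- Necessary condition for global convergence of state evolution (Lemma 7): Suppose φ and ψ satisfy Assumption A and let α ∈ (0,1]. If for every initialization (τ_S^{(0)}, τ_L^{(0)}) ∈ (0,∞)×(0,∞) the noiseless SE sequences satisfy lim_{t→∞} τ_S^{(t)} = 0 and lim_{t→∞} τ_L^{(t)} = 0, then necessarily α ≥ α_nec, where α_nec := sup_{x>0} (φ(x)+ψ(x))/(φ(x)+ψ(x)+x). -/

import Mathlib

/-- Necessary condition for global convergence of state evolution (Lemma 7).
If, for every positive initialization, the noiseless state-evolution sequences
converge to zero, then `α ≥ α_nec := sup_{x>0} (φ(x)+ψ(x))/(φ(x)+ψ(x)+x)`. -/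
theorem stmt0 (φ ψ : ℝ → ℝ) (α : ℝ)
    (hφnn : ∀ x ∈ Set.Ici (0:ℝ), 0 ≤ φ x)
    (hψnn : ∀ x ∈ Set.Ici (0:ℝ), 0 ≤ ψ x)
    (hφ0 : φ 0 = 0) (hψ0 : ψ 0 = 0)
    (hφc : ContinuousOn φ (Set.Ici 0)) (hψc : ContinuousOn ψ (Set.Ici 0))
    (hφm : StrictMonoOn φ (Set.Ici 0)) (hψm : StrictMonoOn ψ (Set.Ici 0))
    (hφd : DifferentiableOn ℝ φ (Set.Ici 0)) (hψd : DifferentiableOn ℝ ψ (Set.Ici 0))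
    (hφd' : ContinuousOn (deriv φ) (Set.Ici 0)) (hψd' : ContinuousOn (deriv ψ) (Set.Ici 0))
    (hα : α ∈ Set.Ioc (0:ℝ) 1)
    (hconv : ∀ τS τL : ℕ → ℝ, 0 < τS 0 → 0 < τL 0 →
      (∀ t, τS (t+1) = φ ((1/α - 1) * τS t + (1/α) * τL t)) →
      (∀ t, τL (t+1) = ψ ((1/α - 1) * τL t + (1/α) * τS t)) →
      Filter.Tendsto τS Filter.atTop (nhds 0) ∧ Filter.Tendsto τL Filter.atTop (nhds 0)) :
    sSup {y : ℝ | ∃ x > 0, y = (φ x + ψ x) / (φ x + ψ x + x)} ≤ α := by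
  obtain ⟨hα0, hα1⟩ := hα
  apply Real.sSup_le _ hα0.le
  rintro y ⟨x, hx, rfl⟩
  by_contra hlt
  push_neg at hlt
  have hφx : 0 ≤ φ x := hφnn x (Set.mem_Ici.mpr hx.le)
  have hψx : 0 ≤ ψ x := hψnn x (Set.mem_Ici.mpr hx.le)
  have hs : 0 ≤ φ x + ψ x := add_nonneg hφx hψx
  have hden : 0 < φ x + ψ x + x := by linarith
  have hy1 : (φ x + ψ x) / (φ x + ψ x + x) < 1 := by
    rw [div_lt_one hden]; linarith
  have hαlt1 : α < 1 := lt_trans hlt hy1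
  set β := 1/α - 1 with hβ
  have hβ0 : 0 < β := by
    have h1α : 1 < 1/α := by
      rw [lt_div_iff₀ hα0]; linarith
    rw [hβ]; linarith
  set u := x / β with hu
  have hu0 : 0 < u := div_pos hx hβ0
  have hβα : β * α = 1 - α := by
    rw [hβ, sub_mul, one_div, inv_mul_cancel₀ hα0.ne']; ring
  have h1 : α * (φ x + ψ x + x) < φ x + ψ x := (lt_div_iff₀ hden).mp hlt
  have hxu : x = β * u := by
    rw [hu]; field_simp
  have hkey : u < φ x + ψ x := by
    rw [hu, div_lt_iff₀ hβ0]
    nlinarith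
  have hone : 1 ≤ 1/α := by
    rw [le_div_iff₀ hα0]; linarith
  set step : ℝ × ℝ → ℝ × ℝ := fun q =>
    (φ ((1/α - 1) * q.1 + (1/α) * q.2), ψ ((1/α - 1) * q.2 + (1/α) * q.1)) with hstep
  set p : ℕ → ℝ × ℝ := fun n => step^[n] (u/2, u/2) with hp
  have hrec : ∀ n, p (n+1) = step (p n) := fun n => Function.iterate_succ_apply' step n _
  have hτS : ∀ t, (p (t+1)).1 = φ ((1/α - 1) * (p t).1 + (1/α) * (p t).2) := by
    intro t; rw [hrec]
  have hτL : ∀ t, (p (t+1)).2 = ψ ((1/α - 1) * (p t).2 + (1/α) * (p t).1) := by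
    intro t; rw [hrec]
  have hp0 : p 0 = (u/2, u/2) := rfl
  have hinv : ∀ t, 0 ≤ (p t).1 ∧ 0 ≤ (p t).2 ∧ u ≤ (p t).1 + (p t).2 := by
    intro t
    induction t with
    | zero =>
      rw [hp0]
      refine ⟨by positivity, by positivity, by simp⟩
    | succ n ih =>
      obtain ⟨h1, h2, h3⟩ := ih
      set a := (1/α - 1) * (p n).1 + (1/α) * (p n).2 with ha
      set b := (1/α - 1) * (p n).2 + (1/α) * (p n).1 with hb
      have hβsum : β * ((p n).1 + (p n).2) ≤ a := by
        rw [ha, hβ]; nlinarith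
      have hβsum' : β * ((p n).1 + (p n).2) ≤ b := by
        rw [hb, hβ]; nlinarith
      have hxa : x ≤ a := by
        have : β * u ≤ β * ((p n).1 + (p n).2) := by nlinarith
        linarith [hxu ▸ this]
      have hxb : x ≤ b := by
        have : β * u ≤ β * ((p n).1 + (p n).2) := by nlinarith
        linarith [hxu ▸ this]
      have ha0 : (0:ℝ) ≤ a := le_trans hx.le hxa
      have hb0 : (0:ℝ) ≤ b := le_trans hx.le hxb
      have hφa : φ x ≤ φ a :=
        hφm.monotoneOn (Set.mem_Ici.mpr hx.le) (Set.mem_Ici.mpr ha0) hxa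
      have hψb : ψ x ≤ ψ b :=
        hψm.monotoneOn (Set.mem_Ici.mpr hx.le) (Set.mem_Ici.mpr hb0) hxb
      refine ⟨?_, ?_, ?_⟩
      · rw [hτS n]; exact hφnn _ (Set.mem_Ici.mpr ha0)
      · rw [hτL n]; exact hψnn _ (Set.mem_Ici.mpr hb0)
      · rw [hτS n, hτL n]
        have := hkey
        linarith
  obtain ⟨hS, hL⟩ := hconv (fun n => (p n).1) (fun n => (p n).2)
    (by show 0 < (p 0).1; rw [hp0]; positivity) (by show 0 < (p 0).2; rw [hp0]; positivity) hτS hτL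
  have hsum : Filter.Tendsto (fun n => (p n).1 + (p n).2) Filter.atTop (nhds 0) := by
    simpa using hS.add hL
  have hle : u ≤ 0 := ge_of_tendsto' hsum (fun t => (hinv t).2.2)
  linarith
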